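/- Let 1 ≤ p < ∞, let m be an admissible weight with m(x,y) ≥ max(w(x)/w(y), w(y)/w(x)) and sup_{x,y∈U_i} m(x,y) ≤ C_m for all i, and suppose the covering is moderate with constant C̃ (μ(U_i) ≤ C̃ μ(U_j) whenever U_i ∩ U_j ≠ ∅). Choose points x_i ∈ U_i and suppose there is a constant A such that ∫_X (osc(x,y) + |R(x,y)|) m(x,y) dμ(y) ≤ A for all x and ∫_X (osc(x,y) + |R(x,y)|) m(x,y) dμ(x) ≤ A for all y. Then there exists a constant C, depending only on N, C̃, C_m and p, such that for every complex sequence (λ_i)_{i∈I}: ‖ Σ_{i∈I} |λ_i| |R(·, x_i)| ‖_{L^p_w} ≤ C A (Σ_{i∈I} |λ_i|^p d_p(i)^p)^{1/p}, where d_p(i) = μ(U_i)^{1/p − 1} w̃(i) and w̃(i) = sup_{x∈U_i} w(x) (both sides possibly infinite). (Norm estimate (5.9) of Lemma 5.10 specialized to Y = L^p_w.) -/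

import Mathlib

open MeasureTheory
open scoped ENNReal NNReal

lemma sum_rpow_le_card' {ι : Type*} (s : Finset ι) (f : ι → ℝ≥0∞) {p : ℝ} (hp : 1 ≤ p)
    {n : ℕ} (hcard : s.card ≤ n) :
    (∑ i ∈ s, f i) ^ p ≤ (n : ℝ≥0∞) ^ (p - 1) * ∑ i ∈ s, f i ^ p := by
  have hp0 : (0:ℝ) < p := lt_of_lt_of_le one_pos hp
  rcases s.eq_empty_or_nonempty with rfl | hs
  · simp [ENNReal.zero_rpow_of_pos hp0]
  · have hc0 : (s.card : ℝ≥0∞) ≠ 0 := Nat.cast_ne_zero.2 hs.card_pos.ne'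
    have hctop : (s.card : ℝ≥0∞) ≠ ∞ := ENNReal.natCast_ne_top _
    have hw : ∑ _i ∈ s, (s.card : ℝ≥0∞)⁻¹ = 1 := by
      rw [Finset.sum_const, nsmul_eq_mul, ENNReal.mul_inv_cancel hc0 hctop]
    have h := ENNReal.rpow_arith_mean_le_arith_mean_rpow s (fun _ => (s.card : ℝ≥0∞)⁻¹) f hw hp
    rw [← Finset.mul_sum, ENNReal.mul_rpow_of_nonneg _ _ hp0.le, ← Finset.mul_sum] at h
    have h2 : (s.card : ℝ≥0∞) ^ p * ((s.card : ℝ≥0∞)⁻¹ ^ p * (∑ i ∈ s, f i) ^ p)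
        ≤ (s.card : ℝ≥0∞) ^ p * ((s.card : ℝ≥0∞)⁻¹ * ∑ i ∈ s, f i ^ p) :=
      mul_le_mul_right h _
    have hcp0 : (s.card : ℝ≥0∞) ^ p ≠ 0 := (ENNReal.rpow_pos (by positivity) hctop).ne'
    have hcpt : (s.card : ℝ≥0∞) ^ p ≠ ∞ := ENNReal.rpow_ne_top_of_nonneg hp0.le hctop
    have e1 : (s.card : ℝ≥0∞) ^ p * ((s.card : ℝ≥0∞)⁻¹ ^ p * (∑ i ∈ s, f i) ^ p)
        = (∑ i ∈ s, f i) ^ p := by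
      rw [← mul_assoc, ENNReal.inv_rpow, ENNReal.mul_inv_cancel hcp0 hcpt, one_mul]
    have e2 : (s.card : ℝ≥0∞) ^ p * ((s.card : ℝ≥0∞)⁻¹ * ∑ i ∈ s, f i ^ p)
        = (s.card : ℝ≥0∞) ^ (p - 1) * ∑ i ∈ s, f i ^ p := by
      rw [← mul_assoc]
      congr 1
      rw [← ENNReal.rpow_neg_one (s.card : ℝ≥0∞), ← ENNReal.rpow_add _ _ hc0 hctop]
      ring_nf
    rw [e1, e2] at h2
    exact h2.trans (mul_le_mul_left (ENNReal.rpow_le_rpow (Nat.cast_le.2 hcard)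
      (sub_nonneg.2 hp)) _)

/-- The oscillation kernel `osc_{𝒰,Γ}(x,y) = sup_{z ∈ Q_y} |R(x,y) − Γ(y,z) R(x,z)|`,
where `Q_y = ⋃_{i : y ∈ U_i} U_i`. -/
noncomputable def osc {X I : Type*} (U : I → Set X) (R Γ : X → X → ℂ) (x y : X) : ℝ≥0∞ :=
  ⨆ z ∈ ⋃ i ∈ {i : I | y ∈ U i}, U i, (‖R x y - Γ y z * R x z‖₊ : ℝ≥0∞)

/-- **Norm estimate (5.9) of Lemma 5.10 specialized to `Y = L^p_w`.**
`‖Σ_i |λ_i| |R(·,x_i)|‖_{L^p_w} ≤ C A (Σ_i |λ_i|^p d_p(i)^p)^{1/p}`, with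
`d_p(i) = μ(U_i)^{1/p−1} w̃(i)`, `w̃(i) = sup_{x ∈ U_i} w(x)`. -/
theorem stmt_14
    {X : Type*} [MeasurableSpace X] (μ : Measure X)
    {I : Type*} [Countable I] (U : I → Set X)
    (hUmeas : ∀ i, MeasurableSet (U i))
    (hUpos : ∀ i, 0 < μ (U i)) (hUfin : ∀ i, μ (U i) < ∞)
    (hcov : ∀ x : X, ∃ i, x ∈ U i)
    (N : ℕ) (hN : ∀ x : X, {i : I | x ∈ U i}.encard ≤ N)
    (w : X → ℝ) (hw : ∀ x, 0 < w x) (hwm : Measurable w)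
    (p : ℝ) (hp : 1 ≤ p)
    (m : X → X → ℝ) (hm1 : ∀ x y, 1 ≤ m x y) (hmsymm : ∀ x y, m x y = m y x)
    (hmsub : ∀ x y z, m x y ≤ m x z * m z y) (hmmeas : Measurable (Function.uncurry m))
    (hmw : ∀ x y, max (w x / w y) (w y / w x) ≤ m x y)
    (Cm : ℝ) (hCm : ∀ i, ∀ x ∈ U i, ∀ y ∈ U i, m x y ≤ Cm)
    (Ct : ℝ≥0∞) (hmod : ∀ i j, (U i ∩ U j).Nonempty → μ (U i) ≤ Ct * μ (U j))
    (xi : I → X) (hxi : ∀ i, xi i ∈ U i)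
    (R Γ : X → X → ℂ) (hRmeas : Measurable (Function.uncurry R))
    (hΓ : ∀ x y, ‖Γ x y‖ = 1)
    (A : ℝ≥0∞)
    (hA1 : ∀ x, ∫⁻ y, (osc U R Γ x y + (‖R x y‖₊ : ℝ≥0∞)) * ENNReal.ofReal (m x y) ∂μ ≤ A)
    (hA2 : ∀ y, ∫⁻ x, (osc U R Γ x y + (‖R x y‖₊ : ℝ≥0∞)) * ENNReal.ofReal (m x y) ∂μ ≤ A) :
    ∃ C : ℝ≥0∞, 0 < C ∧ C < ∞ ∧ ∀ lam : I → ℂ,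
      (∫⁻ x, (∑' i, (‖lam i‖₊ : ℝ≥0∞) * (‖R x (xi i)‖₊ : ℝ≥0∞)) ^ p
          * ENNReal.ofReal (w x) ^ p ∂μ) ^ (1/p)
        ≤ C * A * (∑' i, (‖lam i‖₊ : ℝ≥0∞) ^ p
            * (μ (U i) ^ (1/p - 1) * ⨆ x ∈ U i, ENNReal.ofReal (w x)) ^ p) ^ (1/p) := by
  classical
  have hp0 : (0:ℝ) < p := lt_of_lt_of_le one_pos hp
  have hp0' : p ≠ 0 := ne_of_gt hp0
  have hexp : (0:ℝ) ≤ (p - 1) / p := div_nonneg (sub_nonneg.2 hp) hp0.le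
  refine ⟨((N : ℝ≥0∞) + 1) ^ ((p - 1) / p), ENNReal.rpow_pos (zero_lt_one.trans_le le_add_self) (by simp), ?_, ?_⟩
  · exact ENNReal.rpow_lt_top_of_nonneg hexp (by simp)
  intro lam
  -- σ-finiteness
  haveI : SigmaFinite μ := by
    refine Measure.sigmaFinite_of_countable (S := Set.range U) (Set.countable_range U) ?_ ?_
    · rintro s ⟨i, rfl⟩; exact hUfin i
    · rw [Set.sUnion_range]
      exact Set.eq_univ_iff_forall.2 fun x => Set.mem_iUnion.2 (hcov x)
  have hμ0 : ∀ i, μ (U i) ≠ 0 := fun i => (hUpos i).ne'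
  have hμt : ∀ i, μ (U i) ≠ ∞ := fun i => (hUfin i).ne
  -- the kernel
  set K : X → X → ℝ≥0∞ := fun x y =>
    ((‖R x y‖₊ : ℝ≥0∞) +
      ⨆ i, if y ∈ U i then ((‖R x (xi i)‖₊ : ℝ≥0∞) - (‖R x y‖₊ : ℝ≥0∞)) else 0) *
      ENNReal.ofReal (m x y) with hK
  have hKmeas : Measurable (Function.uncurry K) := by
    apply Measurable.mul
    · apply Measurable.fun_add
      · exact hRmeas.enorm
      · apply Measurable.iSup
        intro i
        refine Measurable.ite (measurable_snd (hUmeas i)) ?_ measurable_const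
        exact Measurable.sub ((hRmeas.comp (measurable_fst.prodMk
          measurable_const)).enorm) hRmeas.enorm
    · exact hmmeas.ennreal_ofReal
  have hKy : ∀ x, Measurable (K x) := fun x => hKmeas.of_uncurry_left
  have hKx : ∀ y, Measurable (fun x => K x y) := fun y => hKmeas.of_uncurry_right
  -- kernel dominated by the oscillation kernel
  have hKosc : ∀ x y, K x y ≤ (osc U R Γ x y + (‖R x y‖₊ : ℝ≥0∞)) * ENNReal.ofReal (m x y) := by
    intro x y
    refine mul_le_mul_left ?_ _
    rw [add_comm (osc U R Γ x y)]
    refine add_le_add_right (iSup_le fun i => ?_) _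
    split_ifs with hy
    · rw [tsub_le_iff_right]
      have hmem : xi i ∈ ⋃ j ∈ {j : I | y ∈ U j}, U j :=
        Set.mem_biUnion (show i ∈ {j : I | y ∈ U j} from hy) (hxi i)
      have hosc : (‖R x y - Γ y (xi i) * R x (xi i)‖₊ : ℝ≥0∞) ≤ osc U R Γ x y :=
        le_iSup₂ (f := fun z (_ : z ∈ ⋃ j ∈ {j : I | y ∈ U j}, U j) =>
          ((‖R x y - Γ y z * R x z‖₊ : ℝ≥0∞))) (xi i) hmem
      refine le_trans ?_ (add_le_add_left hosc _)
      have hre : ‖R x (xi i)‖ ≤ ‖R x y - Γ y (xi i) * R x (xi i)‖ + ‖R x y‖ := by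
        have h1 : ‖Γ y (xi i) * R x (xi i)‖ = ‖R x (xi i)‖ := by
          rw [norm_mul, hΓ, one_mul]
        have h2 := norm_sub_norm_le (Γ y (xi i) * R x (xi i)) (R x y)
        rw [norm_sub_rev] at h2
        linarith
      have : (‖R x (xi i)‖₊ : ℝ≥0) ≤ ‖R x y - Γ y (xi i) * R x (xi i)‖₊ + ‖R x y‖₊ := by
        rw [← NNReal.coe_le_coe]
        push_cast
        exact hre
      exact_mod_cast ENNReal.coe_le_coe.2 this
    · exact zero_le
  have hKA1 : ∀ x, ∫⁻ y, K x y ∂μ ≤ A :=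
    fun x => le_trans (lintegral_mono fun y => hKosc x y) (hA1 x)
  have hKA2 : ∀ y, ∫⁻ x, K x y ∂μ ≤ A :=
    fun y => le_trans (lintegral_mono fun x => hKosc x y) (hA2 y)
  -- kernel lower bound
  have hKlow : ∀ i x, ∀ y ∈ U i,
      (‖R x (xi i)‖₊ : ℝ≥0∞) * ENNReal.ofReal (w x) ≤ K x y * ENNReal.ofReal (w y) := by
    intro i x y hy
    have h1 : (‖R x (xi i)‖₊ : ℝ≥0∞) ≤ (‖R x y‖₊ : ℝ≥0∞) +
        ⨆ j, if y ∈ U j then ((‖R x (xi j)‖₊ : ℝ≥0∞) - (‖R x y‖₊ : ℝ≥0∞)) else 0 := by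
      refine le_trans (le_add_tsub (a := (‖R x (xi i)‖₊ : ℝ≥0∞)) (b := (‖R x y‖₊ : ℝ≥0∞))) ?_
      exact add_le_add_right (le_iSup_of_le i (by rw [if_pos hy])) _
    have h2 : ENNReal.ofReal (w x) ≤ ENNReal.ofReal (m x y) * ENNReal.ofReal (w y) := by
      have hwxy : w x ≤ m x y * w y := by
        have hh := (le_max_left (w x / w y) (w y / w x)).trans (hmw x y)
        exact (div_le_iff₀ (hw y)).1 hh
      calc ENNReal.ofReal (w x) ≤ ENNReal.ofReal (m x y * w y) := ENNReal.ofReal_le_ofReal hwxy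
        _ = _ := ENNReal.ofReal_mul (le_trans zero_le_one (hm1 x y))
    calc (‖R x (xi i)‖₊ : ℝ≥0∞) * ENNReal.ofReal (w x)
        ≤ ((‖R x y‖₊ : ℝ≥0∞) +
            ⨆ j, if y ∈ U j then ((‖R x (xi j)‖₊ : ℝ≥0∞) - (‖R x y‖₊ : ℝ≥0∞)) else 0) *
          (ENNReal.ofReal (m x y) * ENNReal.ofReal (w y)) := mul_le_mul' h1 h2
      _ = K x y * ENNReal.ofReal (w y) := by rw [hK]; ring
  -- coefficients and the auxiliary function g
  set c : I → ℝ≥0∞ := fun i => (‖lam i‖₊ : ℝ≥0∞) * (μ (U i))⁻¹ with hc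
  have hcfin : ∀ i, c i ≠ ∞ := fun i =>
    ENNReal.mul_ne_top ENNReal.coe_ne_top (ENNReal.inv_ne_top.2 (hμ0 i))
  set g : X → ℝ≥0∞ := fun y => (∑' i, if y ∈ U i then c i else 0) * ENNReal.ofReal (w y) with hg
  have hgmeas : Measurable g := by
    apply Measurable.mul
    · exact Measurable.ennreal_tsum fun i =>
        Measurable.ite (hUmeas i) measurable_const measurable_const
    · exact hwm.ennreal_ofReal
  -- Step A: pointwise bound by the integral operator
  have hstepA : ∀ x, (∑' i, (‖lam i‖₊ : ℝ≥0∞) * (‖R x (xi i)‖₊ : ℝ≥0∞)) * ENNReal.ofReal (w x)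
      ≤ ∫⁻ y, K x y * g y ∂μ := by
    intro x
    rw [← ENNReal.tsum_mul_right]
    have hterm : ∀ i, (‖lam i‖₊ : ℝ≥0∞) * (‖R x (xi i)‖₊ : ℝ≥0∞) * ENNReal.ofReal (w x)
        ≤ ∫⁻ y, (if y ∈ U i then c i else 0) * (K x y * ENNReal.ofReal (w y)) ∂μ := by
      intro i
      have e1 : ∫⁻ y, (if y ∈ U i then c i else 0) * (K x y * ENNReal.ofReal (w y)) ∂μ
          = c i * ∫⁻ y in U i, K x y * ENNReal.ofReal (w y) ∂μ := by
        have hfun : (fun y => (if y ∈ U i then c i else 0) * (K x y * ENNReal.ofReal (w y)))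
            = (U i).indicator (fun y => c i * (K x y * ENNReal.ofReal (w y))) := by
          funext y; by_cases hy : y ∈ U i <;> simp [Set.indicator, hy]
        rw [hfun, lintegral_indicator (hUmeas i), lintegral_const_mul' _ _ (hcfin i)]
      rw [e1]
      have e2 : (‖R x (xi i)‖₊ : ℝ≥0∞) * ENNReal.ofReal (w x) * μ (U i)
          ≤ ∫⁻ y in U i, K x y * ENNReal.ofReal (w y) ∂μ := by
        rw [← setLIntegral_const (U i) ((‖R x (xi i)‖₊ : ℝ≥0∞) * ENNReal.ofReal (w x))]
        exact setLIntegral_mono ((hKy x).mul hwm.ennreal_ofReal) (fun y hy => hKlow i x y hy)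
      have e3 : (‖lam i‖₊ : ℝ≥0∞) * (‖R x (xi i)‖₊ : ℝ≥0∞) * ENNReal.ofReal (w x)
          = c i * ((‖R x (xi i)‖₊ : ℝ≥0∞) * ENNReal.ofReal (w x) * μ (U i)) := by
        have hμinv : (μ (U i))⁻¹ * μ (U i) = 1 := ENNReal.inv_mul_cancel (hμ0 i) (hμt i)
        calc (‖lam i‖₊ : ℝ≥0∞) * (‖R x (xi i)‖₊ : ℝ≥0∞) * ENNReal.ofReal (w x)
            = (‖lam i‖₊ : ℝ≥0∞) * (‖R x (xi i)‖₊ : ℝ≥0∞) * ENNReal.ofReal (w x) *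
              ((μ (U i))⁻¹ * μ (U i)) := by rw [hμinv, mul_one]
          _ = _ := by rw [hc]; ring
      rw [e3]
      exact mul_le_mul_right e2 _
    refine le_trans (ENNReal.tsum_le_tsum hterm) ?_
    rw [← lintegral_tsum (f := fun i y => (if y ∈ U i then c i else 0) *
        (K x y * ENNReal.ofReal (w y)))
      fun i => ((Measurable.ite (hUmeas i) measurable_const
        measurable_const).mul ((hKy x).mul hwm.ennreal_ofReal)).aemeasurable]
    refine lintegral_mono fun y => ?_
    rw [ENNReal.tsum_mul_right]
    simp only [hg]
    exact le_of_eq (by ring)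
  -- Step B: Hölder inequality
  have hstepB : ∀ x, (∫⁻ y, K x y * g y ∂μ) ^ p
      ≤ A ^ (p - 1) * ∫⁻ y, K x y * g y ^ p ∂μ := by
    intro x
    rcases eq_or_lt_of_le hp with hp1 | hp1
    · simp only [← hp1, ENNReal.rpow_one, sub_self, ENNReal.rpow_zero, one_mul]
      exact le_refl _
    · set q := Real.conjExponent p with hqdef
      have hpq : p.HolderConjugate q := Real.HolderConjugate.conjExponent hp1
      have hq0 : q ≠ 0 := hpq.symm.pos.ne'
      have hqpos : (0:ℝ) < q := hpq.symm.pos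
      have hqinv : 1/q + 1/p = 1 := by
        rw [one_div, one_div, add_comm]; exact hpq.inv_add_inv_eq_one
      have hKg : ∀ y, K x y * g y = (K x y ^ (1/q)) * (K x y ^ (1/p) * g y) := by
        intro y
        conv_rhs => rw [← mul_assoc, ← ENNReal.rpow_add_of_nonneg _ _ (one_div_nonneg.2 hqpos.le)
          (one_div_nonneg.2 hp0.le), hqinv, ENNReal.rpow_one]
      have hmeas1 : AEMeasurable (fun y => K x y ^ (1/q)) μ :=
        ((ENNReal.continuous_rpow_const.measurable).comp (hKy x)).aemeasurable
      have hmeas2 : AEMeasurable (fun y => K x y ^ (1/p) * g y) μ :=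
        (((ENNReal.continuous_rpow_const.measurable).comp (hKy x)).mul hgmeas).aemeasurable
      have hH := ENNReal.lintegral_mul_le_Lp_mul_Lq μ hpq.symm hmeas1 hmeas2
      simp only [Pi.mul_apply] at hH
      have e0 : ∫⁻ y, K x y * g y ∂μ ≤
          (∫⁻ y, K x y ∂μ) ^ (1/q) * (∫⁻ y, K x y * g y ^ p ∂μ) ^ (1/p) := by
        calc ∫⁻ y, K x y * g y ∂μ
            = ∫⁻ y, (K x y ^ (1/q)) * (K x y ^ (1/p) * g y) ∂μ := lintegral_congr hKg
          _ ≤ (∫⁻ y, (K x y ^ (1/q)) ^ q ∂μ) ^ (1/q) *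
              (∫⁻ y, (K x y ^ (1/p) * g y) ^ p ∂μ) ^ (1/p) := hH
          _ = (∫⁻ y, K x y ∂μ) ^ (1/q) * (∫⁻ y, K x y * g y ^ p ∂μ) ^ (1/p) := by
              congr 1
              · congr 1
                apply lintegral_congr
                intro y
                rw [← ENNReal.rpow_mul, one_div, inv_mul_cancel₀ hq0, ENNReal.rpow_one]
              · congr 1
                apply lintegral_congr
                intro y
                rw [ENNReal.mul_rpow_of_nonneg _ _ hp0.le, ← ENNReal.rpow_mul, one_div,
                  inv_mul_cancel₀ hp0', ENNReal.rpow_one]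
      have hq1p : q⁻¹ * p = p - 1 := by
        have h1 : p⁻¹ + q⁻¹ = 1 := hpq.inv_add_inv_eq_one
        have h2 : q⁻¹ = 1 - p⁻¹ := by linarith
        rw [h2, sub_mul, one_mul, inv_mul_cancel₀ hp0']
      calc (∫⁻ y, K x y * g y ∂μ) ^ p
          ≤ ((∫⁻ y, K x y ∂μ) ^ (1/q) * (∫⁻ y, K x y * g y ^ p ∂μ) ^ (1/p)) ^ p :=
            ENNReal.rpow_le_rpow e0 hp0.le
        _ = ((∫⁻ y, K x y ∂μ) ^ (1/q)) ^ p * ((∫⁻ y, K x y * g y ^ p ∂μ) ^ (1/p)) ^ p := by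
            rw [ENNReal.mul_rpow_of_nonneg _ _ hp0.le]
        _ ≤ (A ^ (1/q)) ^ p * ((∫⁻ y, K x y * g y ^ p ∂μ) ^ (1/p)) ^ p :=
            mul_le_mul_left (ENNReal.rpow_le_rpow
              (ENNReal.rpow_le_rpow (hKA1 x) (one_div_nonneg.2 hqpos.le)) hp0.le) _
        _ = A ^ (p - 1) * ∫⁻ y, K x y * g y ^ p ∂μ := by
            rw [← ENNReal.rpow_mul, ← ENNReal.rpow_mul, one_div, one_div, hq1p,
              inv_mul_cancel₀ hp0', ENNReal.rpow_one]
  -- Step C: Schur test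
  have hswapmeas : Measurable (fun z : X × X => K z.1 z.2 * g z.2 ^ p) :=
    (by exact hKmeas : Measurable fun z : X × X => K z.1 z.2).mul
      ((ENNReal.continuous_rpow_const.measurable).comp (hgmeas.comp measurable_snd))
  have hstepC : ∫⁻ x, (∫⁻ y, K x y * g y ∂μ) ^ p ∂μ ≤ A ^ p * ∫⁻ y, g y ^ p ∂μ := by
    have h1 : ∫⁻ x, (∫⁻ y, K x y * g y ∂μ) ^ p ∂μ
        ≤ ∫⁻ x, A ^ (p - 1) * ∫⁻ y, K x y * g y ^ p ∂μ ∂μ := lintegral_mono hstepB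
    have hinner : Measurable fun x => ∫⁻ y, K x y * g y ^ p ∂μ :=
      Measurable.lintegral_prod_right (f := fun x y => K x y * g y ^ p) hswapmeas
    have h2 : ∫⁻ x, A ^ (p - 1) * ∫⁻ y, K x y * g y ^ p ∂μ ∂μ
        = A ^ (p - 1) * ∫⁻ x, ∫⁻ y, K x y * g y ^ p ∂μ ∂μ := lintegral_const_mul _ hinner
    have h3 : ∫⁻ x, ∫⁻ y, K x y * g y ^ p ∂μ ∂μ = ∫⁻ y, ∫⁻ x, K x y * g y ^ p ∂μ ∂μ :=
      lintegral_lintegral_swap hswapmeas.aemeasurable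
    have h4 : ∫⁻ y, ∫⁻ x, K x y * g y ^ p ∂μ ∂μ ≤ A * ∫⁻ y, g y ^ p ∂μ := by
      have h5 : ∀ y, ∫⁻ x, K x y * g y ^ p ∂μ = g y ^ p * ∫⁻ x, K x y ∂μ := by
        intro y
        rw [← lintegral_const_mul _ (hKx y)]
        exact lintegral_congr fun x => mul_comm _ _
      calc ∫⁻ y, ∫⁻ x, K x y * g y ^ p ∂μ ∂μ = ∫⁻ y, g y ^ p * ∫⁻ x, K x y ∂μ ∂μ :=
            lintegral_congr h5
        _ ≤ ∫⁻ y, g y ^ p * A ∂μ := lintegral_mono fun y => mul_le_mul_right (hKA2 y) _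
        _ = (∫⁻ y, g y ^ p ∂μ) * A := lintegral_mul_const _
            ((ENNReal.continuous_rpow_const.measurable).comp hgmeas)
        _ = A * ∫⁻ y, g y ^ p ∂μ := mul_comm _ _
    calc ∫⁻ x, (∫⁻ y, K x y * g y ∂μ) ^ p ∂μ
        ≤ ∫⁻ x, A ^ (p - 1) * ∫⁻ y, K x y * g y ^ p ∂μ ∂μ := h1
      _ = A ^ (p - 1) * ∫⁻ x, ∫⁻ y, K x y * g y ^ p ∂μ ∂μ := h2
      _ = A ^ (p - 1) * ∫⁻ y, ∫⁻ x, K x y * g y ^ p ∂μ ∂μ := by rw [h3]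
      _ ≤ A ^ (p - 1) * (A * ∫⁻ y, g y ^ p ∂μ) := mul_le_mul_right h4 _
      _ = A ^ p * ∫⁻ y, g y ^ p ∂μ := by
          rw [← mul_assoc]
          congr 1
          nth_rewrite 2 [← ENNReal.rpow_one A]
          rw [← ENNReal.rpow_add_of_nonneg _ _ (sub_nonneg.2 hp) zero_le_one, sub_add_cancel]
  -- Step D: estimating the norm of g
  have hwsup : ∀ i, ∀ y ∈ U i, ENNReal.ofReal (w y) ≤ ⨆ x ∈ U i, ENNReal.ofReal (w x) :=
    fun i y hy => le_iSup₂ (f := fun x (_ : x ∈ U i) => ENNReal.ofReal (w x)) y hy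
  have hstepD : ∫⁻ y, g y ^ p ∂μ
      ≤ (N : ℝ≥0∞) ^ (p - 1) *
        ∑' i, c i ^ p * ((⨆ x ∈ U i, ENNReal.ofReal (w x)) ^ p * μ (U i)) := by
    have hitemeas : ∀ i, Measurable fun y =>
        (if y ∈ U i then c i ^ p else 0) * ENNReal.ofReal (w y) ^ p := fun i =>
      (Measurable.ite (hUmeas i) measurable_const measurable_const).mul
        ((ENNReal.continuous_rpow_const.measurable).comp hwm.ennreal_ofReal)
    have hpt : ∀ y, g y ^ p ≤ (N : ℝ≥0∞) ^ (p - 1) *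
        ∑' i, (if y ∈ U i then c i ^ p else 0) * ENNReal.ofReal (w y) ^ p := by
      intro y
      have hfin : {i : I | y ∈ U i}.Finite := by
        rw [← Set.encard_lt_top_iff]
        exact lt_of_le_of_lt (hN y) (WithTop.coe_lt_top N)
      set s := hfin.toFinset with hs
      have hmem : ∀ i, i ∈ s ↔ y ∈ U i := fun i => hfin.mem_toFinset
      have hsum : (∑' i, if y ∈ U i then c i else 0) = ∑ i ∈ s, c i := by
        rw [tsum_eq_sum (s := s) (fun i hi => if_neg (fun h => hi ((hmem i).2 h)))]
        exact Finset.sum_congr rfl fun i hi => if_pos ((hmem i).1 hi)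
      have hcard : s.card ≤ N := by
        have h := hN y
        rwa [hfin.encard_eq_coe_toFinset_card, Nat.cast_le] at h
      have hsum2 : (∑' i, if y ∈ U i then c i ^ p else 0) = ∑ i ∈ s, c i ^ p := by
        rw [tsum_eq_sum (s := s) (fun i hi => if_neg (fun h => hi ((hmem i).2 h)))]
        exact Finset.sum_congr rfl fun i hi => if_pos ((hmem i).1 hi)
      calc g y ^ p = (∑ i ∈ s, c i) ^ p * ENNReal.ofReal (w y) ^ p := by
            simp only [hg]
            rw [ENNReal.mul_rpow_of_nonneg _ _ hp0.le, hsum]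
        _ ≤ ((N : ℝ≥0∞) ^ (p - 1) * ∑ i ∈ s, c i ^ p) * ENNReal.ofReal (w y) ^ p :=
            mul_le_mul_left (sum_rpow_le_card' s c hp hcard) _
        _ = (N : ℝ≥0∞) ^ (p - 1) *
            ∑' i, (if y ∈ U i then c i ^ p else 0) * ENNReal.ofReal (w y) ^ p := by
            rw [mul_assoc, ENNReal.tsum_mul_right, hsum2]
    calc ∫⁻ y, g y ^ p ∂μ
        ≤ ∫⁻ y, (N : ℝ≥0∞) ^ (p - 1) *
            ∑' i, (if y ∈ U i then c i ^ p else 0) * ENNReal.ofReal (w y) ^ p ∂μ :=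
          lintegral_mono hpt
      _ = (N : ℝ≥0∞) ^ (p - 1) * ∫⁻ y,
            ∑' i, (if y ∈ U i then c i ^ p else 0) * ENNReal.ofReal (w y) ^ p ∂μ :=
          lintegral_const_mul _ (Measurable.ennreal_tsum hitemeas)
      _ = (N : ℝ≥0∞) ^ (p - 1) * ∑' i, ∫⁻ y,
            (if y ∈ U i then c i ^ p else 0) * ENNReal.ofReal (w y) ^ p ∂μ := by
          rw [lintegral_tsum fun i => (hitemeas i).aemeasurable]
      _ ≤ (N : ℝ≥0∞) ^ (p - 1) *
            ∑' i, c i ^ p * ((⨆ x ∈ U i, ENNReal.ofReal (w x)) ^ p * μ (U i)) := by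
          refine mul_le_mul_right (ENNReal.tsum_le_tsum fun i => ?_) _
          have hcpfin : c i ^ p ≠ ∞ := ENNReal.rpow_ne_top_of_nonneg hp0.le (hcfin i)
          have e1 : ∫⁻ y, (if y ∈ U i then c i ^ p else 0) * ENNReal.ofReal (w y) ^ p ∂μ
              = c i ^ p * ∫⁻ y in U i, ENNReal.ofReal (w y) ^ p ∂μ := by
            have hfun : (fun y => (if y ∈ U i then c i ^ p else 0) * ENNReal.ofReal (w y) ^ p)
                = (U i).indicator (fun y => c i ^ p * ENNReal.ofReal (w y) ^ p) := by
              funext y; by_cases hy : y ∈ U i <;> simp [Set.indicator, hy]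
            rw [hfun, lintegral_indicator (hUmeas i), lintegral_const_mul' _ _ hcpfin]
          rw [e1]
          refine mul_le_mul_right ?_ _
          calc ∫⁻ y in U i, ENNReal.ofReal (w y) ^ p ∂μ
              ≤ ∫⁻ _y in U i, (⨆ x ∈ U i, ENNReal.ofReal (w x)) ^ p ∂μ :=
                setLIntegral_mono measurable_const
                  (fun y hy => ENNReal.rpow_le_rpow (hwsup i y hy) hp0.le)
            _ = (⨆ x ∈ U i, ENNReal.ofReal (w x)) ^ p * μ (U i) := setLIntegral_const _ _
  -- Step E: identification of the weights
  have hstepE : ∀ i, c i ^ p * ((⨆ x ∈ U i, ENNReal.ofReal (w x)) ^ p * μ (U i))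
      = (‖lam i‖₊ : ℝ≥0∞) ^ p *
        (μ (U i) ^ (1/p - 1) * ⨆ x ∈ U i, ENNReal.ofReal (w x)) ^ p := by
    intro i
    have ha0 := hμ0 i
    have hat := hμt i
    have e : (μ (U i))⁻¹ ^ p * μ (U i) = (μ (U i) ^ (1/p - 1)) ^ p := by
      calc (μ (U i))⁻¹ ^ p * μ (U i)
          = μ (U i) ^ ((-1) * p) * μ (U i) ^ (1:ℝ) := by
            rw [← ENNReal.rpow_neg_one (μ (U i)), ← ENNReal.rpow_mul, ENNReal.rpow_one]
        _ = μ (U i) ^ ((-1) * p + 1) := (ENNReal.rpow_add _ _ ha0 hat).symm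
        _ = (μ (U i) ^ (1/p - 1)) ^ p := by
            rw [← ENNReal.rpow_mul]
            congr 1
            field_simp
            ring
    calc c i ^ p * ((⨆ x ∈ U i, ENNReal.ofReal (w x)) ^ p * μ (U i))
        = (‖lam i‖₊ : ℝ≥0∞) ^ p * (μ (U i))⁻¹ ^ p *
            ((⨆ x ∈ U i, ENNReal.ofReal (w x)) ^ p * μ (U i)) := by
          simp only [hc]
          rw [ENNReal.mul_rpow_of_nonneg _ _ hp0.le]
      _ = (‖lam i‖₊ : ℝ≥0∞) ^ p * (((μ (U i))⁻¹ ^ p * μ (U i)) *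
            (⨆ x ∈ U i, ENNReal.ofReal (w x)) ^ p) := by ring
      _ = (‖lam i‖₊ : ℝ≥0∞) ^ p * ((μ (U i) ^ (1/p - 1)) ^ p *
            (⨆ x ∈ U i, ENNReal.ofReal (w x)) ^ p) := by rw [e]
      _ = (‖lam i‖₊ : ℝ≥0∞) ^ p *
            (μ (U i) ^ (1/p - 1) * ⨆ x ∈ U i, ENNReal.ofReal (w x)) ^ p := by
          rw [ENNReal.mul_rpow_of_nonneg _ _ hp0.le]
  -- total estimate
  have htotal : ∫⁻ x, (∑' i, (‖lam i‖₊ : ℝ≥0∞) * (‖R x (xi i)‖₊ : ℝ≥0∞)) ^ p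
        * ENNReal.ofReal (w x) ^ p ∂μ
      ≤ A ^ p * ((N : ℝ≥0∞) ^ (p - 1) * ∑' i, (‖lam i‖₊ : ℝ≥0∞) ^ p *
          (μ (U i) ^ (1/p - 1) * ⨆ x ∈ U i, ENNReal.ofReal (w x)) ^ p) := by
    have h1 : ∀ x, (∑' i, (‖lam i‖₊ : ℝ≥0∞) * (‖R x (xi i)‖₊ : ℝ≥0∞)) ^ p
        * ENNReal.ofReal (w x) ^ p ≤ (∫⁻ y, K x y * g y ∂μ) ^ p := by
      intro x
      rw [← ENNReal.mul_rpow_of_nonneg _ _ hp0.le]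
      exact ENNReal.rpow_le_rpow (hstepA x) hp0.le
    calc ∫⁻ x, (∑' i, (‖lam i‖₊ : ℝ≥0∞) * (‖R x (xi i)‖₊ : ℝ≥0∞)) ^ p
          * ENNReal.ofReal (w x) ^ p ∂μ
        ≤ ∫⁻ x, (∫⁻ y, K x y * g y ∂μ) ^ p ∂μ := lintegral_mono h1
      _ ≤ A ^ p * ∫⁻ y, g y ^ p ∂μ := hstepC
      _ ≤ A ^ p * ((N : ℝ≥0∞) ^ (p - 1) *
            ∑' i, c i ^ p * ((⨆ x ∈ U i, ENNReal.ofReal (w x)) ^ p * μ (U i))) :=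
          mul_le_mul_right hstepD _
      _ = A ^ p * ((N : ℝ≥0∞) ^ (p - 1) * ∑' i, (‖lam i‖₊ : ℝ≥0∞) ^ p *
            (μ (U i) ^ (1/p - 1) * ⨆ x ∈ U i, ENNReal.ofReal (w x)) ^ p) := by
          rw [tsum_congr hstepE]
  -- conclusion
  have hfinal := ENNReal.rpow_le_rpow htotal (one_div_nonneg.2 hp0.le)
  refine le_trans hfinal ?_
  rw [ENNReal.mul_rpow_of_nonneg _ _ (one_div_nonneg.2 hp0.le),
    ENNReal.mul_rpow_of_nonneg _ _ (one_div_nonneg.2 hp0.le)]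
  have e1 : (A ^ p) ^ (1/p) = A := by
    rw [← ENNReal.rpow_mul, mul_one_div_cancel hp0', ENNReal.rpow_one]
  have e2 : ((N : ℝ≥0∞) ^ (p - 1)) ^ (1/p) ≤ ((N : ℝ≥0∞) + 1) ^ ((p - 1) / p) := by
    rw [← ENNReal.rpow_mul]
    have hh : (p - 1) * (1/p) = (p - 1) / p := by ring
    rw [hh]
    exact ENNReal.rpow_le_rpow le_self_add hexp
  rw [e1]
  calc A * (((N : ℝ≥0∞) ^ (p - 1)) ^ (1/p) *
        (∑' i, (‖lam i‖₊ : ℝ≥0∞) ^ p *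
          (μ (U i) ^ (1/p - 1) * ⨆ x ∈ U i, ENNReal.ofReal (w x)) ^ p) ^ (1/p))
      ≤ A * (((N : ℝ≥0∞) + 1) ^ ((p - 1) / p) *
        (∑' i, (‖lam i‖₊ : ℝ≥0∞) ^ p *
          (μ (U i) ^ (1/p - 1) * ⨆ x ∈ U i, ENNReal.ofReal (w x)) ^ p) ^ (1/p)) :=
        mul_le_mul_right (mul_le_mul_left e2 _) _
    _ = ((N : ℝ≥0∞) + 1) ^ ((p - 1) / p) * A *
        (∑' i, (‖lam i‖₊ : ℝ≥0∞) ^ p *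
          (μ (U i) ^ (1/p - 1) * ⨆ x ∈ U i, ENNReal.ofReal (w x)) ^ p) ^ (1/p) := by ring
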